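/- Let (A, σ) be an associative unital ring with an involution σ, let J = Jac(A) be the Jacobson radical (which is σ-invariant), and let η ∈ A/J be an idempotent fixed by the induced involution. If η is the image of some idempotent of A, then η is the image of a σ-invariant idempotent of A (i.e. an idempotent f with f^σ = f and f + J = η). -/

import Mathlib

section aux

variable {A : Type*} [Ring A]

/-- Right multiplication stability of `Jac(⊥)`. -/
lemma jac_mul_right {x : A} (hx : x ∈ Ideal.jacobson (⊥ : Ideal A)) (y : A) :
    x * y ∈ Ideal.jacobson (⊥ : Ideal A) :=
  Ideal.mul_mem_right y _ hx

/-- An element congruent to 1 mod `Jac(⊥)` has a two-sided inverse. -/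
lemma unit_of_one_sub_mem {c : A} (hc : c ∈ Ideal.jacobson (⊥ : Ideal A)) :
    ∃ u : A, u * (1 - c) = 1 ∧ (1 - c) * u = 1 ∧ u - 1 ∈ Ideal.jacobson (⊥ : Ideal A) := by
  have h1 : (1 - c) - 1 ∈ Ideal.jacobson (⊥ : Ideal A) := by
    simpa using (Ideal.jacobson (⊥ : Ideal A)).neg_mem hc
  obtain ⟨s, hs⟩ := Ideal.exists_mul_sub_mem_of_sub_one_mem_jacobson _ h1
  rw [Ideal.mem_bot, sub_eq_zero] at hs
  -- hs : s * (1 - c) = 1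
  have hs' : s - s * c = 1 := by rw [← hs, mul_sub, mul_one]
  have hsJ : s - 1 ∈ Ideal.jacobson (⊥ : Ideal A) := by
    have : s - 1 = s * c := by rw [← hs']; noncomm_ring
    rw [this]
    exact Ideal.mul_mem_left _ _ hc
  obtain ⟨t, ht⟩ := Ideal.exists_mul_sub_mem_of_sub_one_mem_jacobson _ hsJ
  rw [Ideal.mem_bot, sub_eq_zero] at ht
  -- ht : t * s = 1
  have hts : t = 1 - c := by
    calc t = t * (s * (1 - c)) := by rw [hs, mul_one]
    _ = (t * s) * (1 - c) := by rw [mul_assoc]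
    _ = 1 - c := by rw [ht, one_mul]
  exact ⟨s, hs, by rw [← hts]; exact ht, hsJ⟩

end aux

/-- Let `A` be a ring with involution `σ` and let `J = Jac(A)` be its Jacobson radical.
If `e` is an idempotent of `A` whose image in `A/J` is fixed by the induced involution
(i.e. `σ e - e ∈ J`), then there is a `σ`-invariant idempotent of `A` with the same
image in `A/J`. -/
theorem stmt_6 {A : Type*} [Ring A] (σ : A → A)
    (hadd : ∀ x y, σ (x + y) = σ x + σ y)
    (hmul : ∀ x y, σ (x * y) = σ y * σ x)
    (hone : σ 1 = 1) (hinvol : ∀ x, σ (σ x) = x)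
    (e : A) (he : e * e = e)
    (hfix : σ e - e ∈ Ideal.jacobson (⊥ : Ideal A)) :
    ∃ f : A, f * f = f ∧ σ f = f ∧ f - e ∈ Ideal.jacobson (⊥ : Ideal A) := by
  set J := Ideal.jacobson (⊥ : Ideal A) with hJdef
  set s := σ e with hsdef
  have hzero : σ 0 = 0 := by
    have := hadd 0 0; simpa using this
  have hsub : ∀ x y, σ (x - y) = σ x - σ y := by
    intro x y
    have hneg : σ (-y) = - σ y := by
      have h := hadd y (-y)
      rw [add_neg_cancel, hzero] at h
      exact eq_neg_of_add_eq_zero_left (by rw [add_comm]; exact h.symm)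
    rw [sub_eq_add_neg, hadd, hneg, sub_eq_add_neg]
  have hss : s * s = s := by rw [hsdef, ← hmul, he]
  have hσs : σ s = e := hinvol e
  -- helper rewriting lemmas
  have hee : ∀ x : A, e * (e * x) = e * x := fun x => by rw [← mul_assoc, he]
  have hsse : ∀ x : A, s * (s * x) = s * x := fun x => by rw [← mul_assoc, hss]
  set c := (e - s) * (e - s) with hcdef
  have hesJ : e - s ∈ J := by
    have := J.neg_mem hfix; simpa using this
  have hcJ : c ∈ J := Ideal.mul_mem_left _ _ hesJ
  have hσc : σ c = c := by
    rw [hcdef, hmul, hsub, hσs, ← hsdef, show s - e = -(e - s) by abel, neg_mul_neg]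
  have hcexp : c = e + s - e * s - s * e := by
    rw [hcdef, sub_mul, mul_sub, mul_sub, he, hss]; abel
  have hec : e * c = c * e := by
    simp only [hcexp, mul_sub, sub_mul, mul_add, add_mul, mul_assoc, he, hss, hee, hsse]
    abel
  have hsc : s * c = c * s := by
    simp only [hcexp, mul_sub, sub_mul, mul_add, add_mul, mul_assoc, he, hss, hee, hsse]
    abel
  have hσz : σ (e * s) = e * s := by rw [hmul, hσs, ← hsdef]
  have hz2 : (e * s) * (e * s) = (1 - c) * (e * s) := by
    simp only [hcexp, mul_sub, sub_mul, mul_add, add_mul, mul_assoc, one_mul,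
      he, hss, hee, hsse]
    abel
  obtain ⟨u, hu1, hu2, huJ⟩ := unit_of_one_sub_mem hcJ
  have hσu : σ u = u := by
    have h1 : (1 - c) * σ u = 1 := by
      have h := congrArg σ hu1
      rw [hmul, hsub, hone, hσc] at h
      exact h
    calc σ u = (u * (1 - c)) * σ u := by rw [hu1, one_mul]
    _ = u * ((1 - c) * σ u) := by rw [mul_assoc]
    _ = u := by rw [h1, mul_one]
  have hcomm : ∀ x : A, x * c = c * x → u * x = x * u := by
    intro x hx
    have h1 : x * (1 - c) = (1 - c) * x := by
      rw [mul_sub, sub_mul, mul_one, one_mul, hx]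
    calc u * x = u * x * ((1 - c) * u) := by rw [hu2, mul_one]
    _ = u * (x * (1 - c)) * u := by noncomm_ring
    _ = u * ((1 - c) * x) * u := by rw [h1]
    _ = (u * (1 - c)) * (x * u) := by noncomm_ring
    _ = x * u := by rw [hu1, one_mul]
  have hzc : (e * s) * c = c * (e * s) := by
    rw [mul_assoc, hsc, ← mul_assoc, hec, mul_assoc]
  have huz : u * (e * s) = (e * s) * u := hcomm (e * s) hzc
  refine ⟨u * (e * s), ?_, ?_, ?_⟩
  · calc u * (e * s) * (u * (e * s)) = u * ((e * s) * u) * (e * s) := by noncomm_ring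
    _ = u * (u * (e * s)) * (e * s) := by rw [huz]
    _ = u * u * ((e * s) * (e * s)) := by noncomm_ring
    _ = u * u * ((1 - c) * (e * s)) := by rw [hz2]
    _ = u * (u * (1 - c)) * (e * s) := by noncomm_ring
    _ = u * (e * s) := by rw [hu1, mul_one]
  · rw [hmul, hσz, hσu, huz]
  · have h1 : u * (e * s) - e = (u - 1) * (e * s) + ((e * s) - e) := by noncomm_ring
    have h2 : (u - 1) * (e * s) ∈ J := jac_mul_right huJ (e * s)
    have h3 : (e * s) - e ∈ J := by
      have hze : (e * s) - e = e * (s - e) := by rw [mul_sub, he]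
      rw [hze]
      exact Ideal.mul_mem_left _ _ hfix
    rw [h1]
    exact J.add_mem h2 h3
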